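/- In the Galois order setup, Γ = Λ^G is a Harish-Chandra subring of the skew monoid ring ℒ = L∗ℳ: for every x ∈ ℒ, the Γ-bimodule ΓxΓ is finitely generated both as a left and as a right Γ-module. -/

import Mathlib

section SkewDefs

variable {L : Type*} [Field L]

/-- The action of an automorphism `g` on `ℒ = L ∗ ℳ` by `g(aν) = g(a)(gνg⁻¹)`. -/
noncomputable def gactR (g : RingAut L) (X : RingAut L →₀ L) : RingAut L →₀ L :=
  X.sum fun ν c => Finsupp.single (g * ν * g⁻¹) (g c)

/-- Left multiplication of `X ∈ ℒ` by a scalar `γ ∈ L`. -/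
noncomputable def lsm (γ : L) (X : RingAut L →₀ L) : RingAut L →₀ L :=
  X.sum fun ν c => Finsupp.single ν (γ * c)

/-- Right multiplication of `X ∈ ℒ` by a scalar `γ ∈ L`: `(cν)·γ = (c ν(γ)) ν`. -/
noncomputable def rsm (X : RingAut L →₀ L) (γ : L) : RingAut L →₀ L :=
  X.sum fun ν c => Finsupp.single ν (c * ν γ)

/-- `Γ = Λ^G` as a subset of `L`. -/
def GammaSet (G : Subgroup (RingAut L)) (Λ : Subring L) : Set L :=
  {a : L | a ∈ Λ ∧ ∀ g ∈ G, g a = a}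

/-- The `Γ`-bimodule `ΓXΓ` generated by `X` inside `ℒ`. -/
noncomputable def gammaBimod (G : Subgroup (RingAut L)) (Λ : Subring L)
    (X : RingAut L →₀ L) : AddSubgroup (RingAut L →₀ L) :=
  AddSubgroup.closure
    {Y | ∃ γ₁ ∈ GammaSet G Λ, ∃ γ₂ ∈ GammaSet G Λ, Y = lsm γ₁ (rsm X γ₂)}

end SkewDefs

section Aux

variable {L : Type*} [Field L]

noncomputable def tact (τ : RingAut L → RingAut L) (γ : L) (Y : RingAut L →₀ L) :
    RingAut L →₀ L := Y.sum fun ν c => Finsupp.single ν (c * τ ν γ)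

lemma sum_single_apply (Y : RingAut L →₀ L) (f : RingAut L → L → L)
    (hf : ∀ ν, f ν 0 = 0) (ν' : RingAut L) :
    (Y.sum fun ν c => Finsupp.single ν (f ν c)) ν' = f ν' (Y ν') := by
  classical
  rw [Finsupp.sum_apply, Finsupp.sum]
  rw [Finset.sum_congr rfl (fun ν _ => Finsupp.single_apply (a := ν) (a' := ν') (b := f ν (Y ν)))]
  rw [Finset.sum_ite_eq' Y.support ν' (fun ν => f ν (Y ν))]
  split_ifs with h
  · rfl
  · rw [Finsupp.notMem_support_iff.mp h, hf]

lemma lsm_apply (γ : L) (Y : RingAut L →₀ L) (ν : RingAut L) : lsm γ Y ν = γ * Y ν :=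
  sum_single_apply Y (fun _ c => γ * c) (fun _ => mul_zero γ) ν

lemma rsm_apply (Y : RingAut L →₀ L) (γ : L) (ν : RingAut L) : rsm Y γ ν = Y ν * ν γ :=
  sum_single_apply Y (fun ν c => c * ν γ) (fun _ => zero_mul _) ν

lemma tact_apply (τ : RingAut L → RingAut L) (γ : L) (Y : RingAut L →₀ L) (ν : RingAut L) :
    tact τ γ Y ν = Y ν * τ ν γ :=
  sum_single_apply Y (fun ν c => c * τ ν γ) (fun _ => zero_mul _) ν

lemma tact_add (τ : RingAut L → RingAut L) (γ : L) (Y₁ Y₂ : RingAut L →₀ L) :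
    tact τ γ (Y₁ + Y₂) = tact τ γ Y₁ + tact τ γ Y₂ := by
  ext ν; simp [tact_apply, Finsupp.add_apply, add_mul]

lemma tact_zero (τ : RingAut L → RingAut L) (γ : L) : tact τ γ (0 : RingAut L →₀ L) = 0 := by
  ext ν; simp [tact_apply]

lemma tact_neg (τ : RingAut L → RingAut L) (γ : L) (Y : RingAut L →₀ L) :
    tact τ γ (-Y) = -(tact τ γ Y) := by
  ext ν; simp [tact_apply]

lemma gammaSet_mul {G : Subgroup (RingAut L)} {Λ : Subring L} {a b : L}
    (ha : a ∈ GammaSet G Λ) (hb : b ∈ GammaSet G Λ) : a * b ∈ GammaSet G Λ :=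
  ⟨Λ.mul_mem ha.1 hb.1, fun g hg => by rw [map_mul, ha.2 g hg, hb.2 g hg]⟩

lemma coef_mem {G : Subgroup (RingAut L)} {Λ : Subring L} {X : RingAut L →₀ L}
    (τ : RingAut L → RingAut L)
    (hclass : ∀ γ₁ ∈ GammaSet G Λ, ∀ γ₂ ∈ GammaSet G Λ, ∀ ν : RingAut L, X ν ≠ 0 →
      ((τ ν)⁻¹ : RingAut L) (γ₁ * ν γ₂) ∈ Λ) :
    ∀ y ∈ gammaBimod G Λ X, ∀ ν : RingAut L, X ν ≠ 0 →
      ((τ ν)⁻¹ : RingAut L) ((X ν)⁻¹ * y ν) ∈ Λ := by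
  intro y hy
  refine AddSubgroup.closure_induction ?_ ?_ ?_ ?_ hy
  · rintro y ⟨γ₁, hγ₁, γ₂, hγ₂, rfl⟩ ν hν
    rw [lsm_apply, rsm_apply]
    have h : (X ν)⁻¹ * (γ₁ * (X ν * ν γ₂)) = γ₁ * ν γ₂ := by
      field_simp
    rw [h]
    exact hclass γ₁ hγ₁ γ₂ hγ₂ ν hν
  · intro ν hν; simpa using Λ.zero_mem
  · intro y z _ _ hy hz ν hν
    have := Λ.add_mem (hy ν hν) (hz ν hν)
    simpa [Finsupp.add_apply, mul_add, map_add] using this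
  · intro y _ hy ν hν
    have := Λ.neg_mem (hy ν hν)
    simpa [Finsupp.neg_apply] using this

lemma supp_sub {G : Subgroup (RingAut L)} {Λ : Subring L} {X : RingAut L →₀ L} :
    ∀ y ∈ gammaBimod G Λ X, ∀ ν : RingAut L, X ν = 0 → y ν = 0 := by
  intro y hy
  refine AddSubgroup.closure_induction ?_ ?_ ?_ ?_ hy
  · rintro y ⟨γ₁, hγ₁, γ₂, hγ₂, rfl⟩ ν hν
    rw [lsm_apply, rsm_apply, hν]; ring
  · intro ν hν; simp
  · intro y z _ _ hy hz ν hν; simp [Finsupp.add_apply, hy ν hν, hz ν hν]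
  · intro y _ hy ν hν; simp [Finsupp.neg_apply, hy ν hν]

lemma bimod_stable {G : Subgroup (RingAut L)} {Λ : Subring L} {X : RingAut L →₀ L}
    (τ : RingAut L → RingAut L)
    (hgen : ∀ γ ∈ GammaSet G Λ, ∀ γ₁ ∈ GammaSet G Λ, ∀ γ₂ ∈ GammaSet G Λ,
      ∃ δ₁ ∈ GammaSet G Λ, ∃ δ₂ ∈ GammaSet G Λ,
        tact τ γ (lsm γ₁ (rsm X γ₂)) = lsm δ₁ (rsm X δ₂)) :
    ∀ γ ∈ GammaSet G Λ, ∀ y ∈ gammaBimod G Λ X, tact τ γ y ∈ gammaBimod G Λ X := by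
  intro γ hγ y hy
  refine AddSubgroup.closure_induction (p := fun y _ => tact τ γ y ∈ gammaBimod G Λ X)
    ?_ ?_ ?_ ?_ hy
  · rintro y ⟨γ₁, hγ₁, γ₂, hγ₂, rfl⟩
    obtain ⟨δ₁, hδ₁, δ₂, hδ₂, h⟩ := hgen γ hγ γ₁ hγ₁ γ₂ hγ₂
    rw [h]
    exact AddSubgroup.subset_closure ⟨δ₁, hδ₁, δ₂, hδ₂, rfl⟩
  · show tact τ γ 0 ∈ _
    rw [tact_zero]; exact (gammaBimod G Λ X).zero_mem
  · intro y z _ _ hy hz; show tact τ γ (y + z) ∈ _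
    rw [tact_add]; exact (gammaBimod G Λ X).add_mem hy hz
  · intro y _ hy; show tact τ γ (-y) ∈ _
    rw [tact_neg]; exact (gammaBimod G Λ X).neg_mem hy

lemma ringAut_inv_apply_apply (e : RingAut L) (x : L) : e⁻¹ (e x) = x :=
  e.symm_apply_apply x

lemma ringAut_apply_inv_apply (e : RingAut L) (x : L) : e (e⁻¹ x) = x :=
  e.apply_symm_apply x

lemma key (G : Subgroup (RingAut L)) (Λ : Subring L)
    (hnoeth : ∀ N : AddSubgroup L, (N : Set L) ⊆ (Λ : Set L) →
      (∀ γ ∈ GammaSet G Λ, ∀ a ∈ N, γ * a ∈ N) →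
      ∃ s : Finset L, (↑s : Set L) ⊆ (N : Set L) ∧
        ∀ y ∈ N, y ∈ AddSubgroup.closure
          {z | ∃ γ ∈ GammaSet G Λ, ∃ w ∈ (↑s : Set L), z = γ * w})
    (X : RingAut L →₀ L) (τ : RingAut L → RingAut L)
    (hgen : ∀ γ ∈ GammaSet G Λ, ∀ γ₁ ∈ GammaSet G Λ, ∀ γ₂ ∈ GammaSet G Λ,
      ∃ δ₁ ∈ GammaSet G Λ, ∃ δ₂ ∈ GammaSet G Λ,
        tact τ γ (lsm γ₁ (rsm X γ₂)) = lsm δ₁ (rsm X δ₂))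
    (hclass : ∀ γ₁ ∈ GammaSet G Λ, ∀ γ₂ ∈ GammaSet G Λ, ∀ ν : RingAut L, X ν ≠ 0 →
      ((τ ν)⁻¹ : RingAut L) (γ₁ * ν γ₂) ∈ Λ) :
    ∃ t : Finset (RingAut L →₀ L),
      (↑t : Set (RingAut L →₀ L)) ⊆ (gammaBimod G Λ X : Set (RingAut L →₀ L)) ∧
      ∀ y ∈ gammaBimod G Λ X, y ∈ AddSubgroup.closure
        {z | ∃ γ ∈ GammaSet G Λ, ∃ w ∈ (↑t : Set (RingAut L →₀ L)), z = tact τ γ w} := by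
  classical
  suffices h : ∀ s : Finset (RingAut L), ↑s ⊆ (X.support : Set (RingAut L)) →
      ∃ t : Finset (RingAut L →₀ L),
        (↑t : Set (RingAut L →₀ L)) ⊆ (gammaBimod G Λ X : Set (RingAut L →₀ L)) ∧
        ∀ y ∈ gammaBimod G Λ X, (∀ ν ∉ s, y ν = 0) →
          y ∈ AddSubgroup.closure
            {z | ∃ γ ∈ GammaSet G Λ, ∃ w ∈ (↑t : Set (RingAut L →₀ L)), z = tact τ γ w} by
    obtain ⟨t, ht1, ht2⟩ := h X.support subset_rfl
    exact ⟨t, ht1, fun y hy => ht2 y hy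
      (fun ν hν => supp_sub y hy ν (Finsupp.notMem_support_iff.mp hν))⟩
  intro s
  induction s using Finset.induction_on with
  | empty =>
    intro _
    refine ⟨∅, by simp, fun y hy h0 => ?_⟩
    have hy0 : y = 0 := Finsupp.ext fun ν => h0 ν (Finset.notMem_empty ν)
    rw [hy0]
    exact AddSubgroup.zero_mem _
  | @insert ν₀ s hν₀s ih =>
    intro hsub
    have hν₀S : ν₀ ∈ X.support := hsub (Finset.mem_insert_self ν₀ s)
    have hXν₀ : X ν₀ ≠ 0 := Finsupp.mem_support_iff.mp hν₀S
    obtain ⟨t₁, ht₁A, ht₁⟩ := ih (fun x hx => hsub (Finset.mem_insert_of_mem hx))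
    set Kc : Set (RingAut L →₀ L) := {y | ∀ ν ∉ insert ν₀ s, y ν = 0} with hKc
    have hK0 : (0 : RingAut L →₀ L) ∈ Kc := fun ν _ => rfl
    have hKadd : ∀ {y z : RingAut L →₀ L}, y ∈ Kc → z ∈ Kc → y + z ∈ Kc := by
      intro y z hy hz ν hν
      rw [Finsupp.add_apply, hy ν hν, hz ν hν, add_zero]
    have hKneg : ∀ {y : RingAut L →₀ L}, y ∈ Kc → -y ∈ Kc := by
      intro y hy ν hν
      rw [Finsupp.neg_apply, hy ν hν, neg_zero]
    set f : (RingAut L →₀ L) →+ L :=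
      { toFun := fun y => ((τ ν₀)⁻¹ : RingAut L) ((X ν₀)⁻¹ * y ν₀)
        map_zero' := by simp
        map_add' := by
          intro y z
          simp only [Finsupp.add_apply, mul_add, map_add] } with hf
    set N : AddSubgroup L :=
      { carrier := {a | ∃ y, (y ∈ gammaBimod G Λ X ∧ y ∈ Kc) ∧ f y = a}
        zero_mem' := ⟨0, ⟨AddSubgroup.zero_mem _, hK0⟩, map_zero f⟩
        add_mem' := by
          rintro a b ⟨y, ⟨hyA, hyK⟩, rfl⟩ ⟨z, ⟨hzA, hzK⟩, rfl⟩
          exact ⟨y + z, ⟨AddSubgroup.add_mem _ hyA hzA, hKadd hyK hzK⟩, map_add f y z⟩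
        neg_mem' := by
          rintro a ⟨y, ⟨hyA, hyK⟩, rfl⟩
          exact ⟨-y, ⟨AddSubgroup.neg_mem _ hyA, hKneg hyK⟩, map_neg f y⟩ } with hN
    have hN1 : (N : Set L) ⊆ (Λ : Set L) := by
      rintro a ⟨y, ⟨hyA, _⟩, rfl⟩
      exact coef_mem τ hclass y hyA ν₀ hXν₀
    have hN2 : ∀ γ ∈ GammaSet G Λ, ∀ a ∈ N, γ * a ∈ N := by
      rintro γ hγ a ⟨y, ⟨hyA, hyK⟩, rfl⟩
      refine ⟨tact τ γ y, ⟨bimod_stable τ hgen γ hγ y hyA,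
        fun ν hν => by rw [tact_apply, hyK ν hν, zero_mul]⟩, ?_⟩
      show ((τ ν₀)⁻¹ : RingAut L) ((X ν₀)⁻¹ * tact τ γ y ν₀)
          = γ * ((τ ν₀)⁻¹ : RingAut L) ((X ν₀)⁻¹ * y ν₀)
      rw [tact_apply, show (X ν₀)⁻¹ * (y ν₀ * (τ ν₀) γ) = ((X ν₀)⁻¹ * y ν₀) * (τ ν₀) γ by ring,
        map_mul, ringAut_inv_apply_apply, mul_comm]
    obtain ⟨s₀, hs₀sub, hs₀gen⟩ := hnoeth N hN1 hN2
    have pickex : ∀ w ∈ N, ∃ y, (y ∈ gammaBimod G Λ X ∧ y ∈ Kc) ∧ f y = w := fun w hw => hw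
    set g : L → (RingAut L →₀ L) :=
      fun w => if h : w ∈ N then (pickex w h).choose else 0 with hg
    have g_spec : ∀ w, w ∈ N → ((g w ∈ gammaBimod G Λ X ∧ g w ∈ Kc) ∧ f (g w) = w) := by
      intro w h
      rw [hg]
      simp only [dif_pos h]
      exact (pickex w h).choose_spec
    set t : Finset (RingAut L →₀ L) := s₀.image g ∪ t₁ with ht
    have htsub : (↑t : Set (RingAut L →₀ L)) ⊆ (gammaBimod G Λ X : Set _) := by
      intro x hx
      rw [ht] at hx
      rcases Finset.mem_union.mp hx with hx | hx
      · obtain ⟨w, hw, rfl⟩ := Finset.mem_image.mp hx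
        exact (g_spec w (hs₀sub hw)).1.1
      · exact ht₁A hx
    refine ⟨t, htsub, ?_⟩
    intro y hyA hyK
    have haN : f y ∈ N := ⟨y, ⟨hyA, hyK⟩, rfl⟩
    have recon : ∀ b ∈ AddSubgroup.closure
        {z | ∃ γ ∈ GammaSet G Λ, ∃ w ∈ (↑s₀ : Set L), z = γ * w},
        ∃ z, z ∈ gammaBimod G Λ X ∧ z ∈ Kc ∧ z ν₀ = X ν₀ * (τ ν₀) b ∧
          z ∈ AddSubgroup.closure
            {z | ∃ γ ∈ GammaSet G Λ, ∃ w ∈ (↑t : Set (RingAut L →₀ L)), z = tact τ γ w} := by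
      intro b hb
      refine AddSubgroup.closure_induction ?_ ?_ ?_ ?_ hb
      · rintro b ⟨γ, hγ, w, hw, rfl⟩
        obtain ⟨⟨hgA, hgK⟩, hgf⟩ := g_spec w (hs₀sub hw)
        have h1 : (g w) ν₀ = X ν₀ * (τ ν₀) w := by
          have h2 : (τ ν₀) (((τ ν₀)⁻¹ : RingAut L) ((X ν₀)⁻¹ * (g w) ν₀)) = (τ ν₀) w :=
            congrArg (τ ν₀) hgf
          rw [ringAut_apply_inv_apply] at h2
          field_simp at h2 ⊢
          linear_combination h2
        refine ⟨tact τ γ (g w), bimod_stable τ hgen γ hγ _ hgA,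
          fun ν hν => by rw [tact_apply, hgK ν hν, zero_mul], ?_,
          AddSubgroup.subset_closure ⟨γ, hγ, g w, ?_, rfl⟩⟩
        · rw [tact_apply, h1, map_mul]
          ring
        · rw [ht]
          push_cast
          exact Set.mem_union_left _ ⟨w, hw, rfl⟩
      · exact ⟨0, AddSubgroup.zero_mem _, hK0, by simp, AddSubgroup.zero_mem _⟩
      · rintro b c _ _ ⟨z₁, hz₁A, hz₁K, hz₁ν₀, hz₁cl⟩ ⟨z₂, hz₂A, hz₂K, hz₂ν₀, hz₂cl⟩
        refine ⟨z₁ + z₂, AddSubgroup.add_mem _ hz₁A hz₂A, hKadd hz₁K hz₂K, ?_,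
          AddSubgroup.add_mem _ hz₁cl hz₂cl⟩
        rw [Finsupp.add_apply, hz₁ν₀, hz₂ν₀, map_add, mul_add]
      · rintro b _ ⟨z, hzA, hzK, hzν₀, hzcl⟩
        refine ⟨-z, AddSubgroup.neg_mem _ hzA, hKneg hzK, ?_, AddSubgroup.neg_mem _ hzcl⟩
        rw [Finsupp.neg_apply, hzν₀, map_neg, mul_neg]
    obtain ⟨z, hzA, hzK, hzν₀, hzcl⟩ := recon (f y) (hs₀gen (f y) haN)
    have hdiffA : y - z ∈ gammaBimod G Λ X := AddSubgroup.sub_mem _ hyA hzA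
    have hdiffs : ∀ ν ∉ s, (y - z) ν = 0 := by
      intro ν hν
      rw [Finsupp.sub_apply]
      by_cases hνν₀ : ν = ν₀
      · subst hνν₀
        rw [hzν₀]
        show y ν - X ν * (τ ν) (((τ ν)⁻¹ : RingAut L) ((X ν)⁻¹ * y ν)) = 0
        rw [ringAut_apply_inv_apply]
        field_simp
        ring
      · have hni : ν ∉ insert ν₀ s := by
          simp only [Finset.mem_insert, not_or]
          exact ⟨hνν₀, hν⟩
        rw [hyK ν hni, hzK ν hni, sub_zero]
    have hmem₁ := ht₁ (y - z) hdiffA hdiffs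
    have hmono : AddSubgroup.closure
        {z | ∃ γ ∈ GammaSet G Λ, ∃ w ∈ (↑t₁ : Set (RingAut L →₀ L)), z = tact τ γ w} ≤
        AddSubgroup.closure
        {z | ∃ γ ∈ GammaSet G Λ, ∃ w ∈ (↑t : Set (RingAut L →₀ L)), z = tact τ γ w} := by
      apply AddSubgroup.closure_mono
      rintro x ⟨γ, hγ, w, hw, rfl⟩
      refine ⟨γ, hγ, w, ?_, rfl⟩
      rw [ht]
      push_cast
      exact Set.mem_union_right _ hw
    have hy_eq : y = (y - z) + z := (sub_add_cancel y z).symm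
    rw [hy_eq]
    exact AddSubgroup.add_mem _ (hmono hmem₁) hzcl

lemma tact_one (γ : L) (w : RingAut L →₀ L) :
    tact (fun _ => (1 : RingAut L)) γ w = lsm γ w := by
  ext ν
  rw [tact_apply, lsm_apply]
  show w ν * γ = γ * w ν
  ring

lemma tact_id (γ : L) (w : RingAut L →₀ L) :
    tact (fun ν : RingAut L => ν) γ w = rsm w γ := rfl

theorem stmt18_aux (L : Type*) [Field L] (G : Subgroup (RingAut L))
    (M : Submonoid (RingAut L))
    (Λ : Subring L)
    (hMΛ : ∀ ν ∈ M, ∀ a : L, a ∈ Λ ↔ ν a ∈ Λ)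
    (hnoeth : ∀ N : AddSubgroup L, (N : Set L) ⊆ (Λ : Set L) →
      (∀ γ ∈ GammaSet G Λ, ∀ a ∈ N, γ * a ∈ N) →
      ∃ s : Finset L, (↑s : Set L) ⊆ (N : Set L) ∧
        ∀ y ∈ N, y ∈ AddSubgroup.closure
          {z | ∃ γ ∈ GammaSet G Λ, ∃ w ∈ (↑s : Set L), z = γ * w})
    (X : RingAut L →₀ L)
    (hXsupp : ∀ ν, X ν ≠ 0 → ν ∈ M) :
    (∃ t : Finset (RingAut L →₀ L),
        (↑t : Set (RingAut L →₀ L)) ⊆ (gammaBimod G Λ X : Set (RingAut L →₀ L)) ∧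
        ∀ y ∈ gammaBimod G Λ X, y ∈ AddSubgroup.closure
          {z | ∃ γ ∈ GammaSet G Λ, ∃ w ∈ (↑t : Set (RingAut L →₀ L)), z = lsm γ w})
    ∧ (∃ t : Finset (RingAut L →₀ L),
        (↑t : Set (RingAut L →₀ L)) ⊆ (gammaBimod G Λ X : Set (RingAut L →₀ L)) ∧
        ∀ y ∈ gammaBimod G Λ X, y ∈ AddSubgroup.closure
          {z | ∃ γ ∈ GammaSet G Λ, ∃ w ∈ (↑t : Set (RingAut L →₀ L)), z = rsm w γ}) := by
  constructor
  · have hgen : ∀ γ ∈ GammaSet G Λ, ∀ γ₁ ∈ GammaSet G Λ, ∀ γ₂ ∈ GammaSet G Λ,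
        ∃ δ₁ ∈ GammaSet G Λ, ∃ δ₂ ∈ GammaSet G Λ,
          tact (fun _ => (1 : RingAut L)) γ (lsm γ₁ (rsm X γ₂)) = lsm δ₁ (rsm X δ₂) := by
      intro γ hγ γ₁ hγ₁ γ₂ hγ₂
      refine ⟨γ * γ₁, gammaSet_mul hγ hγ₁, γ₂, hγ₂, ?_⟩
      ext ν
      simp only [tact_apply, lsm_apply, rsm_apply]
      show γ₁ * (X ν * ν γ₂) * γ = γ * γ₁ * (X ν * ν γ₂)
      ring
    have hclass : ∀ γ₁ ∈ GammaSet G Λ, ∀ γ₂ ∈ GammaSet G Λ, ∀ ν : RingAut L, X ν ≠ 0 →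
        (((fun _ => (1 : RingAut L)) ν)⁻¹ : RingAut L) (γ₁ * ν γ₂) ∈ Λ := by
      intro γ₁ hγ₁ γ₂ hγ₂ ν hν
      show ((1 : RingAut L)⁻¹ : RingAut L) (γ₁ * ν γ₂) ∈ Λ
      rw [inv_one]
      exact Λ.mul_mem hγ₁.1 ((hMΛ ν (hXsupp ν hν) γ₂).mp hγ₂.1)
    obtain ⟨t, ht1, ht2⟩ := key G Λ hnoeth X (fun _ => (1 : RingAut L)) hgen hclass
    refine ⟨t, ht1, fun y hy => ?_⟩
    have hset : {z | ∃ γ ∈ GammaSet G Λ, ∃ w ∈ (↑t : Set (RingAut L →₀ L)), z = lsm γ w}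
        = {z | ∃ γ ∈ GammaSet G Λ, ∃ w ∈ (↑t : Set (RingAut L →₀ L)),
            z = tact (fun _ => (1 : RingAut L)) γ w} := by
      ext z
      constructor
      · rintro ⟨γ, hγ, w, hw, rfl⟩
        exact ⟨γ, hγ, w, hw, (tact_one γ w).symm⟩
      · rintro ⟨γ, hγ, w, hw, rfl⟩
        exact ⟨γ, hγ, w, hw, (tact_one γ w)⟩
    rw [hset]
    exact ht2 y hy
  · have hgen : ∀ γ ∈ GammaSet G Λ, ∀ γ₁ ∈ GammaSet G Λ, ∀ γ₂ ∈ GammaSet G Λ,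
        ∃ δ₁ ∈ GammaSet G Λ, ∃ δ₂ ∈ GammaSet G Λ,
          tact (fun ν : RingAut L => ν) γ (lsm γ₁ (rsm X γ₂)) = lsm δ₁ (rsm X δ₂) := by
      intro γ hγ γ₁ hγ₁ γ₂ hγ₂
      refine ⟨γ₁, hγ₁, γ₂ * γ, gammaSet_mul hγ₂ hγ, ?_⟩
      ext ν
      simp only [tact_apply, lsm_apply, rsm_apply]
      show γ₁ * (X ν * ν γ₂) * ν γ = γ₁ * (X ν * ν (γ₂ * γ))
      rw [map_mul]
      ring
    have hclass : ∀ γ₁ ∈ GammaSet G Λ, ∀ γ₂ ∈ GammaSet G Λ, ∀ ν : RingAut L, X ν ≠ 0 →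
        (((fun ν : RingAut L => ν) ν)⁻¹ : RingAut L) (γ₁ * ν γ₂) ∈ Λ := by
      intro γ₁ hγ₁ γ₂ hγ₂ ν hν
      show (ν⁻¹ : RingAut L) (γ₁ * ν γ₂) ∈ Λ
      rw [map_mul, ringAut_inv_apply_apply]
      refine Λ.mul_mem ?_ hγ₂.1
      refine (hMΛ ν (hXsupp ν hν) _).mpr ?_
      rw [ringAut_apply_inv_apply]
      exact hγ₁.1
    obtain ⟨t, ht1, ht2⟩ := key G Λ hnoeth X (fun ν : RingAut L => ν) hgen hclass
    refine ⟨t, ht1, fun y hy => ?_⟩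
    have hset : {z | ∃ γ ∈ GammaSet G Λ, ∃ w ∈ (↑t : Set (RingAut L →₀ L)), z = rsm w γ}
        = {z | ∃ γ ∈ GammaSet G Λ, ∃ w ∈ (↑t : Set (RingAut L →₀ L)),
            z = tact (fun ν : RingAut L => ν) γ w} := by
      ext z
      constructor
      · rintro ⟨γ, hγ, w, hw, rfl⟩
        exact ⟨γ, hγ, w, hw, (tact_id γ w).symm⟩
      · rintro ⟨γ, hγ, w, hw, rfl⟩
        exact ⟨γ, hγ, w, hw, (tact_id γ w)⟩
    rw [hset]
    exact ht2 y hy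

end Aux

/-- In the Galois order setup, `Γ = Λ^G` is a Harish-Chandra subring of `ℒ = L ∗ ℳ`:
for every `X ∈ ℒ`, the `Γ`-bimodule `ΓXΓ` is finitely generated both as a left and as a
right `Γ`-module. -/
theorem stmt18 (L : Type*) [Field L] (G : Subgroup (RingAut L))
    (hGfin : (G : Set (RingAut L)).Finite)
    (M : Submonoid (RingAut L))
    (hsep : ∀ ν₁ ∈ M, ∀ ν₂ ∈ M, ν₁ * ν₂⁻¹ ∈ G → ν₁ = ν₂)
    (hinv : ∀ g ∈ G, ∀ ν ∈ M, g * ν * g⁻¹ ∈ M)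
    (Λ : Subring L)
    (hGΛ : ∀ g ∈ G, ∀ a ∈ Λ, g a ∈ Λ)
    (hMΛ : ∀ ν ∈ M, ∀ a : L, a ∈ Λ ↔ ν a ∈ Λ)
    (hnoeth : ∀ N : AddSubgroup L, (N : Set L) ⊆ (Λ : Set L) →
      (∀ γ ∈ GammaSet G Λ, ∀ a ∈ N, γ * a ∈ N) →
      ∃ s : Finset L, (↑s : Set L) ⊆ (N : Set L) ∧
        ∀ y ∈ N, y ∈ AddSubgroup.closure
          {z | ∃ γ ∈ GammaSet G Λ, ∃ w ∈ (↑s : Set L), z = γ * w})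
    (X : RingAut L →₀ L)
    (hXsupp : ∀ ν, X ν ≠ 0 → ν ∈ M) :
    (∃ t : Finset (RingAut L →₀ L),
        (↑t : Set (RingAut L →₀ L)) ⊆ (gammaBimod G Λ X : Set (RingAut L →₀ L)) ∧
        ∀ y ∈ gammaBimod G Λ X, y ∈ AddSubgroup.closure
          {z | ∃ γ ∈ GammaSet G Λ, ∃ w ∈ (↑t : Set (RingAut L →₀ L)), z = lsm γ w})
    ∧ (∃ t : Finset (RingAut L →₀ L),
        (↑t : Set (RingAut L →₀ L)) ⊆ (gammaBimod G Λ X : Set (RingAut L →₀ L)) ∧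
        ∀ y ∈ gammaBimod G Λ X, y ∈ AddSubgroup.closure
          {z | ∃ γ ∈ GammaSet G Λ, ∃ w ∈ (↑t : Set (RingAut L →₀ L)), z = rsm w γ}) :=
  stmt18_aux L G M Λ hMΛ hnoeth X hXsupp
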